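/- Let x_1, ..., x_l be columns of X ∈ R^{d×l} with M = max_j ||x_j||, and suppose the Gram-type matrix α·X^T·X is fed to a columnwise softmax. If X is Δ-separated with Δ ≥ 2/(α·l) + (1/α)·log(2(l-1)·l·α·M²), then for every i, the i-th column of X·softmax(α·X^T·X) is within Euclidean distance 2M(l-1)·exp(2/l - α·Δ) of x_i. -/
import Mathlib


open RealInnerProductSpace

set_option maxHeartbeats 1200000 in
/-- If the tokens `x₁, …, x_l` are `Δ`-separated with
`Δ ≥ 2/(αl) + (1/α) log (2(l-1)lαM²)` where `M = max_j ‖xⱼ‖`, then each column of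
`X softmax(α Xᵀ X)` is within Euclidean distance `2M(l-1) exp(2/l - αΔ)` of the
corresponding token: self-attention acts approximately as the identity. -/
theorem stmt10 (d l : ℕ) (x : Fin l → EuclideanSpace ℝ (Fin d))
    (α M Δ : ℝ) (hα : 0 < α)
    (hM : IsGreatest (Set.range (fun j => ‖x j‖)) M)
    (hsep : ∀ i j, j ≠ i → Δ ≤ ⟪x i, x i⟫ - ⟪x i, x j⟫)
    (hcond : Δ ≥ 2 / (α * l) + (1 / α) * Real.log (2 * ((l : ℝ) - 1) * l * α * M ^ 2)) :
    ∀ i, ‖x i - ∑ j, (Real.exp (α * ⟪x j, x i⟫) / ∑ m, Real.exp (α * ⟪x m, x i⟫)) • x j‖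
      ≤ 2 * M * ((l : ℝ) - 1) * Real.exp (2 / (l : ℝ) - α * Δ) := by
  intro i
  haveI : Nonempty (Fin l) := ⟨i⟩
  have hl1 : 1 ≤ l := Nat.one_le_iff_ne_zero.mpr (fun h => by subst h; exact i.elim0)
  obtain ⟨j0, hj0⟩ := hM.1
  have hM0 : 0 ≤ M := hj0 ▸ norm_nonneg _
  set S : Fin l → ℝ := fun j => Real.exp (α * ⟪x j, x i⟫) with hS
  set Z : ℝ := ∑ m, S m with hZ
  have hZpos : 0 < Z := Finset.sum_pos (fun j _ => Real.exp_pos _) Finset.univ_nonempty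
  have hsum1 : ∑ j, S j / Z = 1 := by
    rw [← Finset.sum_div, ← hZ]; field_simp
  -- rewrite the difference as a convex combination of differences
  have hrw : x i - ∑ j, (S j / Z) • x j = ∑ j, (S j / Z) • (x i - x j) := by
    simp only [smul_sub, Finset.sum_sub_distrib, ← Finset.sum_smul, hsum1, one_smul]
  rw [hrw]
  have hterm : ∀ j ∈ Finset.univ.erase i,
      ‖(S j / Z) • (x i - x j)‖ ≤ Real.exp (-(α * Δ)) * (2 * M) := by
    intro j hj
    have hji : j ≠ i := Finset.ne_of_mem_erase hj
    have hp : S j / Z ≤ Real.exp (-(α * Δ)) := by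
      have hZi : S i ≤ Z := Finset.single_le_sum (f := S) (fun m _ => (Real.exp_pos _).le)
        (Finset.mem_univ i)
      have h1 : S j / Z ≤ S j / S i := by
        gcongr
      refine h1.trans ?_
      rw [hS, ← Real.exp_sub, Real.exp_le_exp]
      have := hsep i j hji
      have hcomm : ⟪x j, x i⟫ = ⟪x i, x j⟫ := real_inner_comm _ _
      nlinarith [hα]
    have hnx : ‖x i - x j‖ ≤ 2 * M := by
      have h1 : ‖x i‖ ≤ M := hM.2 ⟨i, rfl⟩
      have h2 : ‖x j‖ ≤ M := hM.2 ⟨j, rfl⟩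
      calc ‖x i - x j‖ ≤ ‖x i‖ + ‖x j‖ := norm_sub_le _ _
        _ ≤ 2 * M := by linarith
    rw [norm_smul, Real.norm_eq_abs, abs_of_nonneg (by positivity)]
    exact mul_le_mul hp hnx (norm_nonneg _) (Real.exp_pos _).le
  calc ‖∑ j, (S j / Z) • (x i - x j)‖
      ≤ ∑ j, ‖(S j / Z) • (x i - x j)‖ := norm_sum_le _ _
    _ = ∑ j ∈ Finset.univ.erase i, ‖(S j / Z) • (x i - x j)‖ := by
        rw [← Finset.add_sum_erase _ _ (Finset.mem_univ i)]
        simp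
    _ ≤ ∑ j ∈ Finset.univ.erase i, Real.exp (-(α * Δ)) * (2 * M) :=
        Finset.sum_le_sum hterm
    _ = ((l : ℝ) - 1) * (Real.exp (-(α * Δ)) * (2 * M)) := by
        rw [Finset.sum_const, nsmul_eq_mul]
        congr 1
        rw [Finset.card_erase_of_mem (Finset.mem_univ i), Finset.card_univ, Fintype.card_fin]
        push_cast [Nat.cast_sub hl1]
        ring
    _ ≤ 2 * M * ((l : ℝ) - 1) * Real.exp (2 / (l : ℝ) - α * Δ) := by
        have hexp : Real.exp (-(α * Δ)) ≤ Real.exp (2 / (l : ℝ) - α * Δ) := by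
          apply Real.exp_le_exp.mpr
          have : (0:ℝ) ≤ 2 / (l : ℝ) := by positivity
          linarith
        have hl0 : (0:ℝ) ≤ (l : ℝ) - 1 := by
          have : (1:ℝ) ≤ (l:ℝ) := by exact_mod_cast hl1
          linarith
        have heq : ((l:ℝ) - 1) * (Real.exp (-(α * Δ)) * (2 * M))
            = 2 * M * ((l:ℝ) - 1) * Real.exp (-(α * Δ)) := by ring
        rw [heq]
        exact mul_le_mul_of_nonneg_left hexp (mul_nonneg (by positivity) hl0)
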